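/- Let K = K₀((X))((Y)) be the iterated Laurent series field over a field K₀ of characteristic not 2, and let φ = ⟨X, Y, XY⟩ (the diagonal quadratic form X·u² + Y·v² + XY·w²). Then 1 is not represented by φ over K, yet T_K(φ) = N_K(φ) = K*² ∪ XK*² ∪ YK*² ∪ XYK*². -/

import Mathlib

open scoped TensorProduct

noncomputable section

/-- Nonzero values represented by a quadratic form, as a subset of the field. -/
def Dv {K V : Type*} [Field K] [AddCommGroup V] [Module K V]
    (Q : QuadraticForm K V) : Set K :=
  {a | a ≠ 0 ∧ ∃ v, Q v = a}

/-- Values represented by a quadratic form, as a set of units. -/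
def Dunits {K V : Type*} [Field K] [AddCommGroup V] [Module K V]
    (Q : QuadraticForm K V) : Set Kˣ :=
  {u | ∃ v, Q v = (u : K)}

/-- `T_K(Q)`: the subgroup of `Kˣ` generated by the values represented by `Q`. -/
def Tgrp {K V : Type*} [Field K] [AddCommGroup V] [Module K V]
    (Q : QuadraticForm K V) : Subgroup Kˣ :=
  Subgroup.closure (Dunits Q)

/-- `N_K(Q)`: the subgroup of `Kˣ` generated by products of two represented values. -/
def Ngrp {K V : Type*} [Field K] [AddCommGroup V] [Module K V]
    (Q : QuadraticForm K V) : Subgroup Kˣ :=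
  Subgroup.closure {u : Kˣ | ∃ a b : Kˣ, a ∈ Dunits Q ∧ b ∈ Dunits Q ∧ u = a * b}

variable (K₀ : Type*) [Field K₀]

/-- The iterated Laurent series field `K₀((X))((Y))`. -/
def LK (K₀ : Type*) [Field K₀] : Type _ := LaurentSeries (LaurentSeries K₀)

noncomputable instance : Field (LK K₀) :=
  inferInstanceAs (Field (LaurentSeries (LaurentSeries K₀)))

/-- The element `X` of `K₀((X))((Y))`. -/
def elX : LK K₀ := HahnSeries.C (HahnSeries.single (1 : ℤ) (1 : K₀))

/-- The element `Y` of `K₀((X))((Y))`. -/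
def elY : LK K₀ := HahnSeries.single (1 : ℤ) (1 : LaurentSeries K₀)

/-- The diagonal form `⟨X, Y, XY⟩` over `K₀((X))((Y))`. -/
def phiXY : QuadraticForm (LK K₀) (Fin 3 → LK K₀) :=
  QuadraticMap.weightedSumSquares (LK K₀) ![elX K₀, elY K₀, elX K₀ * elY K₀]

namespace Stmt2Aux

variable {F : Type*} [Field F]

open HahnSeries

/-- Coefficients of the square root of a power series with constant coefficient 1. -/
noncomputable def sqAux (p : ℕ → F) : ℕ → F
  | 0 => 1
  | (n+1) => (2:F)⁻¹ * (p (n+1) - ∑ i ∈ (Finset.range n).attach,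
      sqAux p (i.1+1) * sqAux p (n-i.1))
  decreasing_by
  · have := Finset.mem_range.mp i.2; omega
  · have := Finset.mem_range.mp i.2; omega

lemma sqAux_mul (h2 : (2:F) ≠ 0) (p : ℕ → F) (hp : p 0 = 1) (n : ℕ) :
    ∑ ij ∈ Finset.HasAntidiagonal.antidiagonal n, sqAux p ij.1 * sqAux p ij.2 = p n := by
  rw [Finset.Nat.sum_antidiagonal_eq_sum_range_succ_mk]
  cases n with
  | zero => simpa [sqAux] using hp.symm
  | succ n =>
    rw [Finset.sum_range_succ, Finset.sum_range_succ']
    have h0 : sqAux p 0 = 1 := by simp [sqAux]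
    have hs : sqAux p (n+1) = (2:F)⁻¹ * (p (n+1) -
        ∑ i ∈ Finset.range n, sqAux p (i+1) * sqAux p (n-i)) := by
      rw [sqAux]
      congr 1
      rw [sub_right_inj, ← Finset.sum_attach (Finset.range n)
        (fun i => sqAux p (i+1) * sqAux p (n-i))]
    have he : ∀ i : ℕ, n + 1 - (i+1) = n - i := fun i => by omega
    simp only [he, Nat.sub_zero, Nat.sub_self, h0, one_mul, mul_one]
    rw [hs]
    field_simp
    ring

/-- A power series with constant coefficient 1 is a square (char ≠ 2). -/
lemma powerSeries_sq (h2 : (2:F) ≠ 0) (P : PowerSeries F)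
    (hP : PowerSeries.constantCoeff P = 1) :
    ∃ Q : PowerSeries F, Q * Q = P := by
  refine ⟨PowerSeries.mk (sqAux fun n => PowerSeries.coeff n P), ?_⟩
  ext n
  rw [PowerSeries.coeff_mul]
  simp only [PowerSeries.coeff_mk]
  exact sqAux_mul h2 _ (by simpa using hP) n

lemma laurent_factor (h2 : (2:F) ≠ 0) {f : LaurentSeries F} (hf : f ≠ 0) :
    ∃ c : LaurentSeries F, f = single f.order f.leadingCoeff * c ^ 2 := by
  have ha : f.leadingCoeff ≠ 0 := leadingCoeff_ne_zero.mpr hf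
  have hc0 : PowerSeries.constantCoeff
      (PowerSeries.C f.leadingCoeff⁻¹ * f.powerSeriesPart) = 1 := by
    have h1 : PowerSeries.constantCoeff f.powerSeriesPart = f.leadingCoeff := by
      rw [← PowerSeries.coeff_zero_eq_constantCoeff_apply,
        LaurentSeries.powerSeriesPart_coeff]
      rw [Nat.cast_zero, add_zero, ← leadingCoeff_eq]
    simp [h1, inv_mul_cancel₀ ha]
  obtain ⟨Q, hQ⟩ := powerSeries_sq h2 _ hc0
  refine ⟨HahnSeries.ofPowerSeries ℤ F Q, ?_⟩
  have hpsp : f.powerSeriesPart = PowerSeries.C f.leadingCoeff * (Q * Q) := by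
    rw [hQ, ← mul_assoc, ← map_mul, mul_inv_cancel₀ ha, map_one, one_mul]
  calc f = single f.order 1 * HahnSeries.ofPowerSeries ℤ F f.powerSeriesPart := by
        rw [LaurentSeries.single_order_mul_powerSeriesPart]
    _ = single f.order 1 * (HahnSeries.C f.leadingCoeff *
          (HahnSeries.ofPowerSeries ℤ F Q * HahnSeries.ofPowerSeries ℤ F Q)) := by
        rw [hpsp, map_mul, map_mul]
        congr 2
        exact PowerSeries.coe_C _
    _ = single f.order f.leadingCoeff * HahnSeries.ofPowerSeries ℤ F Q ^ 2 := by
        rw [C_apply, ← mul_assoc, single_mul_single, add_zero, one_mul, sq]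

/-- Every nonzero Laurent series is its leading coefficient times `X^(0 or 1)` times
a square, according to the parity of its order. -/
lemma laurent_class (h2 : (2:F) ≠ 0) {f : LaurentSeries F} (hf : f ≠ 0) :
    ∃ c : LaurentSeries F,
      (Even f.order ∧ f = HahnSeries.C f.leadingCoeff * c ^ 2) ∨
      (¬ Even f.order ∧ f = HahnSeries.C f.leadingCoeff * single 1 1 * c ^ 2) := by
  obtain ⟨c, hc⟩ := laurent_factor h2 hf
  have single_sq : ∀ q : ℤ, (single q (1:F))^2 = single (q+q) 1 := fun q => by
    rw [sq, single_mul_single, one_mul]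
  rcases Int.even_or_odd f.order with ⟨q, hq⟩ | ⟨q, hq⟩
  · refine ⟨single q 1 * c, Or.inl ⟨⟨q, hq⟩, ?_⟩⟩
    have key : HahnSeries.C f.leadingCoeff * (single q (1:F))^2
        = single (q+q) f.leadingCoeff := by
      rw [single_sq, C_apply, single_mul_single, zero_add, mul_one]
    conv_lhs => rw [hc, hq]
    rw [← key, mul_pow]; ring
  · refine ⟨single q 1 * c, Or.inr ⟨?_, ?_⟩⟩
    · rw [hq]; simp [Int.even_add_one, parity_simps]
    · have key : HahnSeries.C f.leadingCoeff * single (1:ℤ) (1:F) * (single q (1:F))^2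
          = single (2*q+1) f.leadingCoeff := by
        rw [single_sq, C_apply, single_mul_single, single_mul_single]
        norm_num
        congr 1
        ring
      conv_lhs => rw [hc, hq]
      rw [← key, mul_pow]; ring

lemma mul_olc {f g : LaurentSeries F} (hf : f ≠ 0) (hg : g ≠ 0) :
    f * g ≠ 0 ∧ (f*g).order = f.order + g.order ∧
      (f*g).leadingCoeff = f.leadingCoeff * g.leadingCoeff := by
  refine ⟨mul_ne_zero hf hg, order_mul hf hg, ?_⟩
  rw [leadingCoeff_eq, order_mul hf hg, coeff_mul_order_add_order]

lemma sq_olc {f : LaurentSeries F} (hf : f ≠ 0) :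
    f^2 ≠ 0 ∧ (f^2).order = f.order + f.order ∧
      (f^2).leadingCoeff = f.leadingCoeff^2 := by
  have := mul_olc hf hf
  rw [← sq] at this
  exact ⟨this.1, this.2.1, by rw [this.2.2, sq]⟩

lemma add_olc {f g : LaurentSeries F} (hf : f ≠ 0) (hg : g ≠ 0) (h : f.order < g.order) :
    f + g ≠ 0 ∧ (f+g).order = f.order ∧ (f+g).leadingCoeff = f.leadingCoeff := by
  have hT : f.orderTop < g.orderTop := by
    rw [← order_eq_orderTop_of_ne_zero hf, ← order_eq_orderTop_of_ne_zero hg]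
    exact_mod_cast h
  have hOT : (f+g).orderTop = f.orderTop := orderTop_add_eq_left hT
  have hne : f + g ≠ 0 := by
    rw [← orderTop_ne_top, hOT, ← order_eq_orderTop_of_ne_zero hf]
    exact WithTop.coe_ne_top
  refine ⟨hne, ?_, leadingCoeff_add_eq_left hT⟩
  have := hOT
  rw [← order_eq_orderTop_of_ne_zero hne, ← order_eq_orderTop_of_ne_zero hf] at this
  exact_mod_cast this

lemma add_olc_eq {f g : LaurentSeries F} (hf : f ≠ 0) (hg : g ≠ 0)
    (h : f.order = g.order) (hlc : f.leadingCoeff + g.leadingCoeff ≠ 0) :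
    f + g ≠ 0 ∧ (f+g).order = f.order ∧
      (f+g).leadingCoeff = f.leadingCoeff + g.leadingCoeff := by
  have hco : (f+g).coeff f.order = f.leadingCoeff + g.leadingCoeff := by
    rw [coeff_add, ← leadingCoeff_eq]
    conv_lhs => rw [h, ← leadingCoeff_eq]
  have hne : f + g ≠ 0 := fun h0 => hlc (by rw [← hco, h0, coeff_zero])
  have hle : (f+g).order ≤ f.order := order_le_of_coeff_ne_zero (by rw [hco]; exact hlc)
  have hge : f.order ≤ (f+g).order := by
    have := min_order_le_order_add hne
    rwa [← h, min_self] at this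
  have hor : (f+g).order = f.order := le_antisymm hle hge
  exact ⟨hne, hor, by rw [leadingCoeff_eq, hor, hco]⟩

/-- Square-class info for an inner Laurent series: parity of order and
leading coefficient being a square. -/
structure Pinfo (a : LaurentSeries F) (e : Prop) : Prop where
  ne : a ≠ 0
  ev : Even a.order ↔ e
  sq : ∃ β : F, a.leadingCoeff = β^2

lemma Pinfo.add {a b : LaurentSeries F} {e e' : Prop}
    (ha : Pinfo a e) (hb : Pinfo b e') (hne : ¬(e ↔ e')) :
    Pinfo (a+b) e ∨ Pinfo (a+b) e' := by
  have hor : a.order ≠ b.order := fun h => hne (by rw [← ha.ev, ← hb.ev, h])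
  rcases lt_or_gt_of_ne hor with h | h
  · obtain ⟨h1, h2, h3⟩ := add_olc ha.ne hb.ne h
    exact Or.inl ⟨h1, by rw [h2]; exact ha.ev, h3 ▸ ha.sq⟩
  · obtain ⟨h1, h2, h3⟩ := add_olc hb.ne ha.ne h
    rw [add_comm] at h1 h2 h3
    exact Or.inr ⟨h1, by rw [h2]; exact hb.ev, h3 ▸ hb.sq⟩

lemma Pinfo_sq {a : LaurentSeries F} (ha : a ≠ 0) : Pinfo (a^2) True := by
  obtain ⟨h1, h2, h3⟩ := sq_olc ha
  exact ⟨h1, by rw [h2]; simp [Even.add_self], ⟨a.leadingCoeff, h3⟩⟩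

lemma Pinfo_Xsq {a : LaurentSeries F} (ha : a ≠ 0) :
    Pinfo (single 1 1 * a^2) False := by
  have hs := sq_olc ha
  obtain ⟨h1, h2, h3⟩ := mul_olc (single_ne_zero (one_ne_zero : (1:F) ≠ 0)) hs.1
  refine ⟨h1, ?_, ?_⟩
  · rw [h2, order_single one_ne_zero, hs.2.1]
    constructor
    · rintro ⟨r, hr⟩; omega
    · exact fun h => h.elim
  · rw [h3, leadingCoeff_of_single, one_mul, hs.2.2]
    exact ⟨a.leadingCoeff, rfl⟩

/-- The elements `X` and `Y` of `F((X))((Y))`. -/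
noncomputable def XX (F : Type*) [Field F] : LaurentSeries (LaurentSeries F) :=
  HahnSeries.C (single 1 1)
noncomputable def YY (F : Type*) [Field F] : LaurentSeries (LaurentSeries F) :=
  single 1 1

lemma XX_ne : XX F ≠ 0 := C_ne_zero (single_ne_zero one_ne_zero)
lemma YY_ne : YY F ≠ 0 := single_ne_zero one_ne_zero
lemma XX_order : (XX F).order = 0 := by
  rw [XX, C_apply]; exact order_single (single_ne_zero one_ne_zero)
lemma XX_lc : (XX F).leadingCoeff = single 1 1 := by
  rw [XX, C_apply]; exact leadingCoeff_of_single

/-- Square-class info for elements of `F((X))((Y))`. -/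
structure Qinfo (f : LaurentSeries (LaurentSeries F)) (e₂ e₁ : Prop) : Prop where
  ne : f ≠ 0
  ev : Even f.order ↔ e₂
  lc : Pinfo f.leadingCoeff e₁

lemma Qinfo.iff {f : LaurentSeries (LaurentSeries F)} {e₂ e₁ d₂ d₁ : Prop}
    (h : Qinfo f e₂ e₁) (h₂ : e₂ ↔ d₂) (h₁ : e₁ ↔ d₁) : Qinfo f d₂ d₁ :=
  ⟨h.ne, h.ev.trans h₂, ⟨h.lc.ne, h.lc.ev.trans h₁, h.lc.sq⟩⟩

lemma Qinfo.add {f g : LaurentSeries (LaurentSeries F)} {e₂ e₁ e₂' e₁' : Prop}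
    (hf : Qinfo f e₂ e₁) (hg : Qinfo g e₂' e₁')
    (h : ¬(e₂ ↔ e₂') ∨ ((e₂ ↔ e₂') ∧ ¬(e₁ ↔ e₁'))) :
    Qinfo (f+g) e₂ e₁ ∨ Qinfo (f+g) e₂' e₁' := by
  rcases eq_or_ne f.order g.order with ho | ho
  · have h22 : e₂ ↔ e₂' := by rw [← hf.ev, ← hg.ev, ho]
    have h11 : ¬(e₁ ↔ e₁') := by
      rcases h with h | h
      · exact absurd h22 h
      · exact h.2
    have hP := Pinfo.add hf.lc hg.lc h11
    have hlcne : f.leadingCoeff + g.leadingCoeff ≠ 0 := by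
      rcases hP with hP | hP <;> exact hP.ne
    obtain ⟨h1, h2, h3⟩ := add_olc_eq hf.ne hg.ne ho hlcne
    rcases hP with hP | hP
    · exact Or.inl ⟨h1, by rw [h2]; exact hf.ev, h3 ▸ hP⟩
    · exact Or.inr ⟨h1, by rw [h2, ho]; exact hg.ev, h3 ▸ hP⟩
  · rcases lt_or_gt_of_ne ho with hlt | hlt
    · obtain ⟨h1, h2, h3⟩ := add_olc hf.ne hg.ne hlt
      exact Or.inl ⟨h1, by rw [h2]; exact hf.ev, h3 ▸ hf.lc⟩
    · obtain ⟨h1, h2, h3⟩ := add_olc hg.ne hf.ne hlt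
      rw [add_comm] at h1 h2 h3
      exact Or.inr ⟨h1, by rw [h2]; exact hg.ev, h3 ▸ hg.lc⟩

lemma Q_sq {v : LaurentSeries (LaurentSeries F)} (hv : v ≠ 0) :
    Qinfo (v^2) True True := by
  obtain ⟨h1, h2, h3⟩ := sq_olc hv
  refine ⟨h1, by rw [h2]; simp [Even.add_self], ?_⟩
  rw [h3]
  exact Pinfo_sq (leadingCoeff_ne_zero.mpr hv)

lemma Q_Xsq {u : LaurentSeries (LaurentSeries F)} (hu : u ≠ 0) :
    Qinfo (XX F * u^2) True False := by
  have hs := sq_olc hu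
  obtain ⟨h1, h2, h3⟩ := mul_olc (XX_ne) hs.1
  refine ⟨h1, ?_, ?_⟩
  · rw [h2, XX_order, hs.2.1, zero_add]; simp [Even.add_self]
  · rw [h3, XX_lc, hs.2.2]
    exact Pinfo_Xsq (leadingCoeff_ne_zero.mpr hu)

lemma Q_Ymul {h : LaurentSeries (LaurentSeries F)} {e₂ e₁ : Prop}
    (hQ : Qinfo h e₂ e₁) : Qinfo (YY F * h) (¬ e₂) e₁ := by
  obtain ⟨h1, h2, h3⟩ := mul_olc (YY_ne) hQ.ne
  refine ⟨h1, ?_, ?_⟩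
  · rw [h2, YY, order_single one_ne_zero, ← hQ.ev]
    constructor
    · rintro ⟨r, hr⟩ ⟨s, hs⟩; omega
    · intro hne
      rcases Int.even_or_odd h.order with he | ⟨s, hs⟩
      · exact absurd he hne
      · exact ⟨s+1, by omega⟩
  · rw [h3, YY, leadingCoeff_of_single, one_mul]
    exact hQ.lc

/-- Every nonzero value of the form `⟨X, Y, XY⟩` lies in the square class of `X`, `Y` or
`XY`, with the doubly-leading coefficient a square. -/
lemma val_classify (u v w : LaurentSeries (LaurentSeries F))
    (hne : ¬(u = 0 ∧ v = 0 ∧ w = 0)) :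
    Qinfo (XX F * u^2 + YY F * v^2 + XX F * YY F * w^2) True False ∨
    Qinfo (XX F * u^2 + YY F * v^2 + XX F * YY F * w^2) False True ∨
    Qinfo (XX F * u^2 + YY F * v^2 + XX F * YY F * w^2) False False := by
  have key : ∀ (_ : ¬(v = 0 ∧ w = 0)),
      Qinfo (v^2 + XX F * w^2) True True ∨ Qinfo (v^2 + XX F * w^2) True False := by
    intro hvw
    by_cases hv : v = 0
    · have hw : w ≠ 0 := fun hw => hvw ⟨hv, hw⟩
      right
      have : v^2 + XX F * w^2 = XX F * w^2 := by rw [hv]; ring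
      rw [this]
      exact Q_Xsq hw
    · by_cases hw : w = 0
      · left
        have : v^2 + XX F * w^2 = v^2 := by rw [hw]; ring
        rw [this]
        exact Q_sq hv
      · exact Qinfo.add (Q_sq hv) (Q_Xsq hw) (Or.inr ⟨Iff.rfl, by simp⟩)
  by_cases hvw : v = 0 ∧ w = 0
  · have hu : u ≠ 0 := fun hu => hne ⟨hu, hvw⟩
    left
    have : XX F * u^2 + YY F * v^2 + XX F * YY F * w^2 = XX F * u^2 := by
      rw [hvw.1, hvw.2]; ring
    rw [this]
    exact Q_Xsq hu
  · have hY : Qinfo (YY F * (v^2 + XX F * w^2)) False True ∨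
        Qinfo (YY F * (v^2 + XX F * w^2)) False False := by
      rcases key hvw with h | h
      · exact Or.inl ((Q_Ymul h).iff (by tauto) Iff.rfl)
      · exact Or.inr ((Q_Ymul h).iff (by tauto) Iff.rfl)
    have hre : XX F * u^2 + YY F * v^2 + XX F * YY F * w^2
        = XX F * u^2 + YY F * (v^2 + XX F * w^2) := by ring
    rw [hre]
    by_cases hu : u = 0
    · have : XX F * u^2 + YY F * (v^2 + XX F * w^2) = YY F * (v^2 + XX F * w^2) := by
        rw [hu]; ring
      rw [this]
      exact Or.inr hY
    · rcases hY with h | h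
      · rcases Qinfo.add (Q_Xsq hu) h (Or.inl (by tauto)) with h' | h'
        · exact Or.inl h'
        · exact Or.inr (Or.inl h')
      · rcases Qinfo.add (Q_Xsq hu) h (Or.inl (by tauto)) with h' | h'
        · exact Or.inl h'
        · exact Or.inr (Or.inr h')

lemma two_ne_zero' (h2 : (2:F) ≠ 0) : (2 : LaurentSeries F) ≠ 0 := by
  have : (2 : LaurentSeries F) = HahnSeries.C (2:F) := by rw [map_ofNat]
  rw [this]
  exact C_ne_zero h2

/-- Any nonzero `f` whose doubly-leading coefficient is a square lies in one of the four
square classes `1, X, Y, XY`. -/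
lemma classify (h2 : (2:F) ≠ 0) {f : LaurentSeries (LaurentSeries F)} (hf : f ≠ 0)
    (hsq : ∃ β : F, f.leadingCoeff.leadingCoeff = β^2) :
    ∃ c : LaurentSeries (LaurentSeries F),
      f = c^2 ∨ f = XX F * c^2 ∨ f = YY F * c^2 ∨ f = XX F * YY F * c^2 := by
  obtain ⟨c, hc⟩ := laurent_class (two_ne_zero' h2) hf
  have ha : f.leadingCoeff ≠ 0 := leadingCoeff_ne_zero.mpr hf
  obtain ⟨d, hd⟩ := laurent_class h2 ha
  obtain ⟨β, hβ⟩ := hsq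
  have hkey : (HahnSeries.C f.leadingCoeff : LaurentSeries (LaurentSeries F)) =
        (HahnSeries.C (HahnSeries.C β * d))^2 ∨
      (HahnSeries.C f.leadingCoeff : LaurentSeries (LaurentSeries F)) =
        XX F * (HahnSeries.C (HahnSeries.C β * d))^2 := by
    rcases hd with ⟨_, hd⟩ | ⟨_, hd⟩
    · left
      rw [hd, hβ]
      simp only [map_mul, map_pow]
      ring
    · right
      rw [hd, hβ]
      simp only [XX, map_mul, map_pow]
      ring
  rcases hc with ⟨_, hc⟩ | ⟨_, hc⟩ <;> rcases hkey with hk | hk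
  · exact ⟨HahnSeries.C (HahnSeries.C β * d) * c,
      Or.inl (by rw [hc, hk]; ring)⟩
  · exact ⟨HahnSeries.C (HahnSeries.C β * d) * c,
      Or.inr (Or.inl (by rw [hc, hk]; ring))⟩
  · exact ⟨HahnSeries.C (HahnSeries.C β * d) * c,
      Or.inr (Or.inr (Or.inl (by rw [hc, hk, YY]; ring)))⟩
  · exact ⟨HahnSeries.C (HahnSeries.C β * d) * c,
      Or.inr (Or.inr (Or.inr (by rw [hc, hk, YY]; ring)))⟩

lemma Qinfo_one {e₂ e₁ : Prop} (h : Qinfo (1 : LaurentSeries (LaurentSeries F)) e₂ e₁) :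
    e₂ ∧ e₁ := by
  constructor
  · rw [← h.ev, order_one]; exact Even.zero
  · have := h.lc
    rw [leadingCoeff_one] at this
    rw [← this.ev, order_one]; exact Even.zero

end Stmt2Aux

open Stmt2Aux

variable {K₀}

lemma elX_ne : elX K₀ ≠ 0 := XX_ne
lemma elY_ne : elY K₀ ≠ 0 := YY_ne

lemma val_classifyLK (u v w : LK K₀) (hne : ¬(u = 0 ∧ v = 0 ∧ w = 0)) :
    Qinfo (elX K₀ * u^2 + elY K₀ * v^2 + elX K₀ * elY K₀ * w^2) True False ∨
    Qinfo (elX K₀ * u^2 + elY K₀ * v^2 + elX K₀ * elY K₀ * w^2) False True ∨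
    Qinfo (elX K₀ * u^2 + elY K₀ * v^2 + elX K₀ * elY K₀ * w^2) False False :=
  val_classify u v w hne

lemma classifyLK (h2 : (2 : K₀) ≠ 0) {f : LK K₀} (hf : f ≠ 0)
    (hsq : ∃ β : K₀, (HahnSeries.leadingCoeff
      (HahnSeries.leadingCoeff (f : LaurentSeries (LaurentSeries K₀)))) = β^2) :
    ∃ c : LK K₀, f = c^2 ∨ f = elX K₀ * c^2 ∨ f = elY K₀ * c^2 ∨
      f = elX K₀ * elY K₀ * c^2 :=
  classify h2 hf hsq

lemma phiXY_apply (v : Fin 3 → LK K₀) :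
    phiXY K₀ v = elX K₀ * (v 0)^2 + elY K₀ * (v 1)^2 + elX K₀ * elY K₀ * (v 2)^2 := by
  simp [phiXY, QuadraticMap.weightedSumSquares_apply, Fin.sum_univ_three, smul_eq_mul, sq]

lemma D_X (c : LK K₀) : phiXY K₀ ![c, 0, 0] = elX K₀ * c^2 := by
  rw [phiXY_apply]; simp

lemma D_Y (c : LK K₀) : phiXY K₀ ![0, c, 0] = elY K₀ * c^2 := by
  rw [phiXY_apply]; simp

lemma D_XY (c : LK K₀) : phiXY K₀ ![0, 0, c] = elX K₀ * elY K₀ * c^2 := by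
  rw [phiXY_apply]; simp

/-- The subgroup `K*² ∪ XK*² ∪ YK*² ∪ XYK*²` of `Kˣ`. -/
def Sgrp (K₀ : Type*) [Field K₀] : Subgroup (LK K₀)ˣ where
  carrier := {u | ∃ c : LK K₀, (u : LK K₀) = c ^ 2 ∨ (u : LK K₀) = elX K₀ * c ^ 2 ∨
      (u : LK K₀) = elY K₀ * c ^ 2 ∨ (u : LK K₀) = elX K₀ * elY K₀ * c ^ 2}
  one_mem' := ⟨1, Or.inl (by rw [Units.val_one, one_pow])⟩
  mul_mem' := by
    rintro a b ⟨c, hc | hc | hc | hc⟩ ⟨d, hd | hd | hd | hd⟩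
    · exact ⟨c*d, Or.inl (by rw [Units.val_mul, hc, hd]; ring)⟩
    · exact ⟨c*d, Or.inr (Or.inl (by rw [Units.val_mul, hc, hd]; ring))⟩
    · exact ⟨c*d, Or.inr (Or.inr (Or.inl (by rw [Units.val_mul, hc, hd]; ring)))⟩
    · exact ⟨c*d, Or.inr (Or.inr (Or.inr (by rw [Units.val_mul, hc, hd]; ring)))⟩
    · exact ⟨c*d, Or.inr (Or.inl (by rw [Units.val_mul, hc, hd]; ring))⟩
    · exact ⟨elX K₀*c*d, Or.inl (by rw [Units.val_mul, hc, hd]; ring)⟩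
    · exact ⟨c*d, Or.inr (Or.inr (Or.inr (by rw [Units.val_mul, hc, hd]; ring)))⟩
    · exact ⟨elX K₀*c*d, Or.inr (Or.inr (Or.inl (by rw [Units.val_mul, hc, hd]; ring)))⟩
    · exact ⟨c*d, Or.inr (Or.inr (Or.inl (by rw [Units.val_mul, hc, hd]; ring)))⟩
    · exact ⟨c*d, Or.inr (Or.inr (Or.inr (by rw [Units.val_mul, hc, hd]; ring)))⟩
    · exact ⟨elY K₀*c*d, Or.inl (by rw [Units.val_mul, hc, hd]; ring)⟩
    · exact ⟨elY K₀*c*d, Or.inr (Or.inl (by rw [Units.val_mul, hc, hd]; ring))⟩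
    · exact ⟨c*d, Or.inr (Or.inr (Or.inr (by rw [Units.val_mul, hc, hd]; ring)))⟩
    · exact ⟨elX K₀*c*d, Or.inr (Or.inr (Or.inl (by rw [Units.val_mul, hc, hd]; ring)))⟩
    · exact ⟨elY K₀*c*d, Or.inr (Or.inl (by rw [Units.val_mul, hc, hd]; ring))⟩
    · exact ⟨elX K₀*elY K₀*c*d, Or.inl (by rw [Units.val_mul, hc, hd]; ring)⟩
  inv_mem' := by
    rintro u ⟨c, hc | hc | hc | hc⟩
    · have hc0 : c ≠ 0 := fun h => u.ne_zero (by rw [hc, h]; ring)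
      exact ⟨c⁻¹, Or.inl (by rw [Units.val_inv_eq_inv_val, hc]; field_simp)⟩
    · have hc0 : c ≠ 0 := fun h => u.ne_zero (by rw [hc, h]; ring)
      refine ⟨(elX K₀)⁻¹ * c⁻¹, Or.inr (Or.inl ?_)⟩
      rw [Units.val_inv_eq_inv_val, hc]
      field_simp [elX_ne]
    · have hc0 : c ≠ 0 := fun h => u.ne_zero (by rw [hc, h]; ring)
      refine ⟨(elY K₀)⁻¹ * c⁻¹, Or.inr (Or.inr (Or.inl ?_))⟩
      rw [Units.val_inv_eq_inv_val, hc]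
      field_simp [elY_ne]
    · have hc0 : c ≠ 0 := fun h => u.ne_zero (by rw [hc, h]; ring)
      refine ⟨(elX K₀)⁻¹ * (elY K₀)⁻¹ * c⁻¹, Or.inr (Or.inr (Or.inr ?_))⟩
      rw [Units.val_inv_eq_inv_val, hc]
      field_simp [elX_ne, elY_ne]

lemma mem_Sgrp {u : (LK K₀)ˣ} : u ∈ Sgrp K₀ ↔
    ∃ c : LK K₀, (u : LK K₀) = c ^ 2 ∨ (u : LK K₀) = elX K₀ * c ^ 2 ∨
      (u : LK K₀) = elY K₀ * c ^ 2 ∨ (u : LK K₀) = elX K₀ * elY K₀ * c ^ 2 :=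
  Iff.rfl

lemma D_sub_S (h2 : (2 : K₀) ≠ 0) : Dunits (phiXY K₀) ⊆ ↑(Sgrp K₀) := by
  rintro u ⟨vec, hvec⟩
  have hne0 : phiXY K₀ vec ≠ 0 := by rw [hvec]; exact u.ne_zero
  rw [phiXY_apply] at hvec hne0
  by_cases h0 : vec 0 = 0 ∧ vec 1 = 0 ∧ vec 2 = 0
  · exfalso; apply hne0; rw [h0.1, h0.2.1, h0.2.2]; ring
  · have hQ := val_classifyLK (vec 0) (vec 1) (vec 2) h0
    have hsq : ∃ β : K₀, (HahnSeries.leadingCoeff (HahnSeries.leadingCoeff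
        ((elX K₀ * (vec 0)^2 + elY K₀ * (vec 1)^2 +
          elX K₀ * elY K₀ * (vec 2)^2 : LK K₀) : LaurentSeries (LaurentSeries K₀)))) = β^2 := by
      rcases hQ with h | h | h <;> exact h.lc.sq
    obtain ⟨c, hcls⟩ := classifyLK h2 hne0 hsq
    rw [hvec] at hcls
    exact ⟨c, hcls⟩

lemma S_sub_N (h2 : (2 : K₀) ≠ 0) : (Sgrp K₀ : Set (LK K₀)ˣ) ⊆ ↑(Ngrp (phiXY K₀)) := by
  rintro u ⟨c, hc | hc | hc | hc⟩ <;>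
    apply Subgroup.subset_closure
  · have hc0 : c ≠ 0 := fun h => u.ne_zero (by rw [hc, h]; ring)
    refine ⟨Units.mk0 (elX K₀ * c^2) (mul_ne_zero elX_ne (pow_ne_zero _ hc0)),
      Units.mk0 (elX K₀ * ((elX K₀)⁻¹)^2)
        (mul_ne_zero elX_ne (pow_ne_zero _ (inv_ne_zero elX_ne))),
      ⟨![c,0,0], by rw [D_X, Units.val_mk0]⟩,
      ⟨![(elX K₀)⁻¹,0,0], by rw [D_X, Units.val_mk0]⟩, ?_⟩
    apply Units.ext
    rw [Units.val_mul, Units.val_mk0, Units.val_mk0, hc]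
    field_simp [elX_ne]
  · have hc0 : c ≠ 0 := fun h => u.ne_zero (by rw [hc, h]; ring)
    refine ⟨Units.mk0 (elY K₀ * c^2) (mul_ne_zero elY_ne (pow_ne_zero _ hc0)),
      Units.mk0 (elX K₀ * elY K₀ * ((elY K₀)⁻¹)^2)
        (mul_ne_zero (mul_ne_zero elX_ne elY_ne) (pow_ne_zero _ (inv_ne_zero elY_ne))),
      ⟨![0,c,0], by rw [D_Y, Units.val_mk0]⟩,
      ⟨![0,0,(elY K₀)⁻¹], by rw [D_XY, Units.val_mk0]⟩, ?_⟩
    apply Units.ext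
    rw [Units.val_mul, Units.val_mk0, Units.val_mk0, hc]
    field_simp [elY_ne]
  · have hc0 : c ≠ 0 := fun h => u.ne_zero (by rw [hc, h]; ring)
    refine ⟨Units.mk0 (elX K₀ * c^2) (mul_ne_zero elX_ne (pow_ne_zero _ hc0)),
      Units.mk0 (elX K₀ * elY K₀ * ((elX K₀)⁻¹)^2)
        (mul_ne_zero (mul_ne_zero elX_ne elY_ne) (pow_ne_zero _ (inv_ne_zero elX_ne))),
      ⟨![c,0,0], by rw [D_X, Units.val_mk0]⟩,
      ⟨![0,0,(elX K₀)⁻¹], by rw [D_XY, Units.val_mk0]⟩, ?_⟩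
    apply Units.ext
    rw [Units.val_mul, Units.val_mk0, Units.val_mk0, hc]
    field_simp [elX_ne]
  · have hc0 : c ≠ 0 := fun h => u.ne_zero (by rw [hc, h]; ring)
    refine ⟨Units.mk0 (elX K₀ * c^2) (mul_ne_zero elX_ne (pow_ne_zero _ hc0)),
      Units.mk0 (elY K₀ * (1:LK K₀)^2) (by rw [one_pow, mul_one]; exact elY_ne),
      ⟨![c,0,0], by rw [D_X, Units.val_mk0]⟩,
      ⟨![0,1,0], by rw [D_Y, Units.val_mk0]⟩, ?_⟩
    apply Units.ext
    rw [Units.val_mul, Units.val_mk0, Units.val_mk0, hc]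
    ring

lemma N_sub_T : Ngrp (phiXY K₀) ≤ Tgrp (phiXY K₀) := by
  rw [Ngrp, Subgroup.closure_le]
  rintro u ⟨a, b, ha, hb, rfl⟩
  exact mul_mem (Subgroup.subset_closure ha) (Subgroup.subset_closure hb)

lemma T_sub_S (h2 : (2 : K₀) ≠ 0) : Tgrp (phiXY K₀) ≤ Sgrp K₀ := by
  rw [Tgrp, Subgroup.closure_le]
  exact D_sub_S h2

/-- over `K = K₀((X))((Y))` the form `⟨X, Y, XY⟩` does not represent 1,
yet `T_K(φ) = N_K(φ) = K*² ∪ XK*² ∪ YK*² ∪ XYK*²`. -/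
theorem stmt_2 (h2 : (2 : K₀) ≠ 0) :
    (1 : (LK K₀)ˣ) ∉ Dunits (phiXY K₀) ∧
      Tgrp (phiXY K₀) = Ngrp (phiXY K₀) ∧
      (∀ u : (LK K₀)ˣ, u ∈ Tgrp (phiXY K₀) ↔
        ∃ c : LK K₀, (u : LK K₀) = c ^ 2 ∨ (u : LK K₀) = elX K₀ * c ^ 2 ∨
          (u : LK K₀) = elY K₀ * c ^ 2 ∨ (u : LK K₀) = elX K₀ * elY K₀ * c ^ 2) := by
  have hSN : Sgrp K₀ ≤ Ngrp (phiXY K₀) := fun u hu => S_sub_N h2 hu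
  have hST : Sgrp K₀ ≤ Tgrp (phiXY K₀) := le_trans hSN N_sub_T
  refine ⟨?_, ?_, ?_⟩
  · rintro ⟨vec, hvec⟩
    rw [Units.val_one, phiXY_apply] at hvec
    by_cases h0 : vec 0 = 0 ∧ vec 1 = 0 ∧ vec 2 = 0
    · apply (one_ne_zero : (1 : LK K₀) ≠ 0)
      rw [← hvec, h0.1, h0.2.1, h0.2.2]; ring
    · have hQ := val_classifyLK (vec 0) (vec 1) (vec 2) h0
      erw [hvec] at hQ
      have hQ : Qinfo (1 : LaurentSeries (LaurentSeries K₀)) True False ∨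
          Qinfo (1 : LaurentSeries (LaurentSeries K₀)) False True ∨
          Qinfo (1 : LaurentSeries (LaurentSeries K₀)) False False := hQ
      rcases hQ with h | h | h
      · exact (Qinfo_one h).2
      · exact (Qinfo_one h).1
      · exact (Qinfo_one h).1
  · exact le_antisymm (le_trans (T_sub_S h2) hSN) N_sub_T
  · intro u
    constructor
    · intro hu
      exact mem_Sgrp.mp (T_sub_S h2 hu)
    · intro hu
      exact hST (mem_Sgrp.mpr hu)


end
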